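/- Let (E, E₊, θ) be a reflection positive Hilbert space and U a unitary operator on E with UE₊ = E₊ and θUθ = U⁻¹. Then the induced operator Û on Ê satisfies Û² = id. -/

import Mathlib

local notation "⟪" x ", " y "⟫" => @inner ℂ _ _ x y

/-- A convex sequence on `ℤ` which is bounded above and below is affine; here we only
record that its second difference at `0` vanishes. -/
lemma aux_convex_bounded (a : ℤ → ℝ) (M : ℝ)
    (hconv : ∀ n : ℤ, 2 * a (n + 1) ≤ a n + a (n + 2))
    (hub : ∀ n : ℤ, a n ≤ M) (_hlb : ∀ n : ℤ, 0 ≤ a n) :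
    a 0 + a 2 = 2 * a 1 := by
  set s : ℤ → ℝ := fun n => a (n + 1) - a n with hs
  have hstep : ∀ n : ℤ, s n ≤ s (n + 1) := by
    intro n
    have h := hconv n
    have h2 : n + 1 + 1 = n + 2 := by ring
    simp only [hs, h2]
    linarith
  have hmono : Monotone s := monotone_int_of_le_succ hstep
  have hgrow : ∀ (n : ℤ) (k : ℕ), a n + k * s n ≤ a (n + k) := by
    intro n k
    induction k with
    | zero => simp
    | succ k ih =>
      have h1 : s n ≤ s (n + k) := hmono (by omega)
      have h2 : a (n + k) + s (n + k) = a (n + k + 1) := by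
        simp only [hs]; ring
      have h3 : (n : ℤ) + (k + 1 : ℕ) = n + k + 1 := by push_cast; ring
      rw [h3]
      push_cast
      nlinarith
  have hdown : ∀ (n : ℤ) (k : ℕ), a n - k * s (n - 1) ≤ a (n - k) := by
    intro n k
    induction k with
    | zero => simp
    | succ k ih =>
      have h1 : s (n - k - 1) ≤ s (n - 1) := hmono (by omega)
      have h2 : s (n - k - 1) = a (n - k) - a (n - k - 1) := by
        simp only [hs]
        have : n - (k : ℤ) - 1 + 1 = n - k := by ring
        rw [this]
      have h3 : (n : ℤ) - (k + 1 : ℕ) = n - k - 1 := by push_cast; ring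
      rw [h3]
      push_cast
      nlinarith
  have hs_nonpos : ∀ n : ℤ, s n ≤ 0 := by
    intro n
    by_contra h
    push_neg at h
    obtain ⟨k, hk⟩ := exists_nat_gt ((M - a n) / s n)
    have h1 : (M - a n) / s n * s n < k * s n := by
      exact mul_lt_mul_of_pos_right hk h
    rw [div_mul_cancel₀ _ (ne_of_gt h)] at h1
    have := hgrow n k
    have := hub (n + k)
    linarith
  have hs_nonneg : ∀ n : ℤ, 0 ≤ s n := by
    intro n
    by_contra h
    push_neg at h
    obtain ⟨k, hk⟩ := exists_nat_gt ((M - a (n + 1)) / (-s n))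
    have hpos : (0 : ℝ) < -s n := by linarith
    have h1 : (M - a (n + 1)) / (-s n) * (-s n) < k * (-s n) := by
      exact mul_lt_mul_of_pos_right hk hpos
    rw [div_mul_cancel₀ _ (ne_of_gt hpos)] at h1
    have h2 := hdown (n + 1) k
    have h3 : n + 1 - 1 = n := by ring
    rw [h3] at h2
    have := hub (n + 1 - k)
    nlinarith
  have e0 : s 0 = 0 := le_antisymm (hs_nonpos 0) (hs_nonneg 0)
  have e1 : s 1 = 0 := le_antisymm (hs_nonpos 1) (hs_nonneg 1)
  simp only [hs] at e0 e1
  norm_num at e0 e1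
  linarith

/-- Let `(E, E₊, θ)` be a reflection positive Hilbert space and `U` unitary on `E` with
`U E₊ = E₊` and `θUθ = U⁻¹`.  Then the induced operator `Û` on `Ê` satisfies `Û² = id`,
i.e. `q(U(Uv)) = q(v)` for all `v ∈ E₊`, expressed via the null condition
`⟨θ(U²v − v), U²v − v⟩ = 0`. -/
theorem statement3
    {E : Type*} [NormedAddCommGroup E] [InnerProductSpace ℂ E] [CompleteSpace E]
    (θ : E ≃ₗᵢ[ℂ] E) (hθinv : ∀ v : E, θ (θ v) = v)
    (Eplus : Submodule ℂ E) (hclosed : IsClosed (Eplus : Set E))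
    (hpos : ∀ v ∈ Eplus, ∃ r : ℝ, 0 ≤ r ∧ ⟪θ v, v⟫ = (r : ℂ))
    (U : E ≃ₗᵢ[ℂ] E) (hUE : U '' (Eplus : Set E) = (Eplus : Set E))
    (hUθ : ∀ v : E, θ (U (θ v)) = U.symm v) :
    ∀ v ∈ Eplus, ⟪θ (U (U v) - v), U (U v) - v⟫ = (0 : ℂ) := by
  intro v hv
  -- `U` and `U⁻¹` preserve `Eplus`
  have hU1 : ∀ x ∈ Eplus, U x ∈ Eplus := by
    intro x hx
    have : U x ∈ U '' (Eplus : Set E) := ⟨x, hx, rfl⟩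
    rwa [hUE] at this
  have hU2 : ∀ x ∈ Eplus, U.symm x ∈ Eplus := by
    intro x hx
    have hx' : x ∈ U '' (Eplus : Set E) := by rw [hUE]; exact hx
    obtain ⟨y, hy, rfl⟩ := hx'
    simpa using hy
  -- the orbit of `v`
  set w : ℤ → E := fun n => (U ^ n) v with hw
  have hw1 : ∀ n : ℤ, w (n + 1) = U (w n) := by
    intro n
    simp only [hw]
    rw [show n + 1 = 1 + n from add_comm _ _, zpow_one_add]
    rfl
  have hw0 : w 0 = v := by simp [hw]
  have hmemw : ∀ n : ℤ, w n ∈ Eplus := by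
    intro n
    induction n using Int.induction_on with
    | zero => rwa [hw0]
    | succ k ih => rw [hw1]; exact hU1 _ ih
    | pred k ih =>
      have h3 : ∀ m : ℤ, w (m - 1) = U.symm (w m) := by
        intro m
        have h := hw1 (m - 1)
        rw [sub_add_cancel] at h
        rw [h]
        simp
      have h4 := hU2 _ ih
      rw [← h3] at h4
      convert h4 using 2
  -- symmetry of `U` with respect to the form `⟪θ ·, ·⟫`
  have hsym : ∀ x y : E, ⟪θ (U x), y⟫ = ⟪θ x, U y⟫ := by
    intro x y
    have h1 : θ (U x) = U.symm (θ x) := by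
      conv_lhs => rw [← hθinv x]
      exact hUθ (θ x)
    rw [h1, ← LinearIsometryEquiv.inner_map_map U (U.symm (θ x)) y]
    simp
  -- the diagonal sequence
  set a : ℤ → ℝ := fun n => (⟪θ (w n), w n⟫).re with ha'
  have ha : ∀ n : ℤ, ⟪θ (w n), w n⟫ = ((a n : ℝ) : ℂ) := by
    intro n
    obtain ⟨r, hr0, hr⟩ := hpos _ (hmemw n)
    simp only [ha', hr, Complex.ofReal_re]
  have ha0 : ∀ n : ℤ, 0 ≤ a n := by
    intro n
    obtain ⟨r, hr0, hr⟩ := hpos _ (hmemw n)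
    simp only [ha', hr, Complex.ofReal_re]
    exact hr0
  have hub : ∀ n : ℤ, a n ≤ ‖v‖ * ‖v‖ := by
    intro n
    have h1 := norm_inner_le_norm (𝕜 := ℂ) (θ (w n)) (w n)
    rw [ha n] at h1
    have h2 : ‖((a n : ℝ) : ℂ)‖ = |a n| := by
      rw [Complex.norm_real, Real.norm_eq_abs]
    have h3 : ‖θ (w n)‖ = ‖v‖ := by
      rw [θ.norm_map]
      simp only [hw]
      exact (U ^ n).norm_map v
    have h4 : ‖w n‖ = ‖v‖ := by
      simp only [hw]
      exact (U ^ n).norm_map v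
    rw [h2, h3, h4] at h1
    calc a n ≤ |a n| := le_abs_self _
      _ ≤ ‖v‖ * ‖v‖ := h1
  -- the key expansion
  have key : ∀ n : ℤ, ⟪θ (w (n + 2) - w n), w (n + 2) - w n⟫ =
      ((a n + a (n + 2) - 2 * a (n + 1) : ℝ) : ℂ) := by
    intro n
    have e2 : w (n + 2) = U (U (w n)) := by
      rw [show n + 2 = n + 1 + 1 by ring, hw1, hw1]
    have c1 : ⟪θ (w (n + 2)), w n⟫ = ((a (n + 1) : ℝ) : ℂ) := by
      rw [e2, hsym (U (w n)) (w n), ← hw1 n, ha]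
    have c2 : ⟪θ (w n), w (n + 2)⟫ = ((a (n + 1) : ℝ) : ℂ) := by
      rw [e2, ← hsym (w n) (U (w n)), ← hw1 n, ha]
    rw [map_sub, inner_sub_left, inner_sub_right, inner_sub_right,
      ha (n + 2), ha n, c1, c2]
    push_cast
    ring
  -- convexity
  have hconv : ∀ n : ℤ, 2 * a (n + 1) ≤ a n + a (n + 2) := by
    intro n
    have hmem := Submodule.sub_mem Eplus (hmemw (n + 2)) (hmemw n)
    obtain ⟨r, hr0, hr⟩ := hpos _ hmem
    have hk := key n
    rw [hr] at hk
    have hre : r = a n + a (n + 2) - 2 * a (n + 1) := by exact_mod_cast hk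
    linarith
  have haff := aux_convex_bounded a (‖v‖ * ‖v‖) hconv hub ha0
  -- conclude
  have hw2v : w 2 = U (U v) := by
    rw [show (2 : ℤ) = 0 + 1 + 1 by norm_num, hw1, hw1, hw0]
  have hkey := key 0
  simp only [show (0 : ℤ) + 2 = 2 from by norm_num, show (0 : ℤ) + 1 = 1 from by norm_num] at hkey
  rw [← hw2v, ← hw0, hkey]
  have : a 0 + a 2 - 2 * a 1 = 0 := by linarith
  rw [show a 0 + a 2 - 2 * a 1 = 0 from this]
  norm_num
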